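/- Let C be an n×n real symmetric positive definite matrix, let 1 ≤ s ≤ n, let A be any m×n real matrix and b ∈ ℝᵐ, and let C^{1/2} denote the symmetric positive semidefinite square root of C. Then the tuple (Θ, υ, ν, π, τ) := (C⁻¹, 0, 0, 0, 1) is DFact-feasible for (C, s, A, b; C^{1/2}) (with k = n), and its objective value equals the spectral bound: −Σ_{ℓ=n−s+1}^{n} log λ_ℓ(C⁻¹) = Σ_{ℓ=1}^{s} log λ_ℓ(C). -/

import Mathlib

open Matrix

/-- The eigenvalues of a real symmetric matrix, sorted in nonincreasing order:
`sortedEigs M 0` is the largest eigenvalue (`λ_1`) and `sortedEigs M (k-1)` the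
smallest (`λ_k`).  For non-Hermitian matrices we return the junk value `0`. -/
noncomputable def sortedEigs {k : ℕ} (M : Matrix (Fin k) (Fin k) ℝ) : Fin k → ℝ :=
  if h : M.IsHermitian then fun i => (h.eigenvalues ∘ Tuple.sort h.eigenvalues) i.rev
  else fun _ => 0

/-- DFact-feasibility of the tuple `(Θ, υ, ν, π, τ)` for the data `(A; F)`:
`Θ ≻ 0`, `υ, ν, π ≥ 0` and `diag(FΘFᵀ) + υ − ν − Aᵀπ − τ𝟙 = 0`. -/
def DFactFeasible {n m k : ℕ} (A : Matrix (Fin m) (Fin n) ℝ) (F : Matrix (Fin n) (Fin k) ℝ)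
    (Θ : Matrix (Fin k) (Fin k) ℝ) (υ ν : Fin n → ℝ) (π : Fin m → ℝ) (τ : ℝ) : Prop :=
  Θ.PosDef ∧ (∀ j, 0 ≤ υ j) ∧ (∀ j, 0 ≤ ν j) ∧ (∀ i, 0 ≤ π i) ∧
    ∀ j, (F * Θ * Fᵀ) j j + υ j - ν j - (∑ i, A i j * π i) - τ = 0

/-- The DFact objective value
`f(Θ, ν, π, τ) = −Σ_{ℓ=k−s+1}^{k} log λ_ℓ(Θ) + νᵀ𝟙 + πᵀb + τ·s − s`. -/
noncomputable def DFactObj {n m k : ℕ} (s : ℕ) (b : Fin m → ℝ)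
    (Θ : Matrix (Fin k) (Fin k) ℝ) (ν : Fin n → ℝ) (π : Fin m → ℝ) (τ : ℝ) : ℝ :=
  -(∑ i : Fin k, if k - s ≤ (i : ℕ) then Real.log (sortedEigs Θ i) else 0)
    + (∑ j, ν j) + (∑ i, π i * b i) + τ * s - s

/-- The square root of a positive semidefinite matrix, as defined in Mathlib of December 2024
(`Matrix.PosSemidef.sqrt`, since removed from Mathlib). -/
noncomputable def Matrix.PosSemidef.sqrt {n : Type*} [Fintype n] [DecidableEq n]
    {A : Matrix n n ℝ} (hA : A.PosSemidef) : Matrix n n ℝ :=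
  hA.1.eigenvectorUnitary.1 * diagonal ((↑) ∘ (√·) ∘ hA.1.eigenvalues) *
    (star hA.1.eigenvectorUnitary : Matrix n n ℝ)

lemma Matrix.PosSemidef.sqrt_isHermitian {n : Type*} [Fintype n] [DecidableEq n]
    {A : Matrix n n ℝ} (hA : A.PosSemidef) : hA.sqrtᵀ = hA.sqrt := by
  simp [Matrix.PosSemidef.sqrt, Matrix.transpose_mul, Matrix.star_eq_conjTranspose,
    Matrix.conjTranspose_eq_transpose_of_trivial, Matrix.mul_assoc]

lemma Matrix.PosSemidef.sqrt_mul_self {n : Type*} [Fintype n] [DecidableEq n]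
    {A : Matrix n n ℝ} (hA : A.PosSemidef) : hA.sqrt * hA.sqrt = A := by
  have hU' : (star hA.1.eigenvectorUnitary : Matrix n n ℝ) * hA.1.eigenvectorUnitary.1 = 1 :=
    (Matrix.mem_unitaryGroup_iff').mp (hA.1.eigenvectorUnitary).2
  have hD : diagonal ((fun x : ℝ => x) ∘ (fun x => √x) ∘ hA.1.eigenvalues) *
      diagonal ((fun x : ℝ => x) ∘ (fun x => √x) ∘ hA.1.eigenvalues)
      = diagonal (RCLike.ofReal ∘ hA.1.eigenvalues) := by
    rw [Matrix.diagonal_mul_diagonal]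
    congr 1
    funext i
    simp [Real.mul_self_sqrt (hA.eigenvalues_nonneg i)]
  conv_rhs => rw [hA.1.spectral_theorem, Unitary.conjStarAlgAut_apply]
  rw [Matrix.PosSemidef.sqrt]
  calc _ = hA.1.eigenvectorUnitary.1 * (diagonal ((fun x : ℝ => x) ∘ (fun x => √x) ∘ hA.1.eigenvalues) *
        ((star hA.1.eigenvectorUnitary : Matrix n n ℝ) * hA.1.eigenvectorUnitary.1) *
        diagonal ((fun x : ℝ => x) ∘ (fun x => √x) ∘ hA.1.eigenvalues)) *
        (star hA.1.eigenvectorUnitary : Matrix n n ℝ) := by simp only [Matrix.mul_assoc]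
    _ = _ := by rw [hU', Matrix.mul_one, hD]

section Aux

open Polynomial

private lemma charpoly_diag {k : ℕ} (d : Fin k → ℝ) :
    (Matrix.diagonal d).charpoly = ∏ i, (X - C (d i)) := by
  have h : charmatrix (Matrix.diagonal d) = Matrix.diagonal (fun i => X - (C (d i))) := by
    ext i j
    by_cases hij : i = j
    · subst hij; simp
    · simp [Matrix.diagonal_apply_ne _ hij, hij]
  rw [Matrix.charpoly, h, Matrix.det_diagonal]

private lemma charpoly_conj {k : ℕ} (U D : Matrix (Fin k) (Fin k) ℝ)
    (hU : U * star U = 1) (hU' : star U * U = 1) :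
    (U * D * star U).charpoly = D.charpoly := by
  have key : charmatrix (U * D * star U)
      = (U.map C) * charmatrix D * ((star U).map C) := by
    unfold charmatrix
    rw [Matrix.mul_sub, Matrix.sub_mul]
    congr 1
    · rw [scalar_apply, ← smul_one_eq_diagonal, mul_smul_comm, smul_mul_assoc, mul_one,
        ← Matrix.map_mul, hU, Matrix.map_one _ (map_zero C) (map_one C)]
    · simp only [RingHom.mapMatrix_apply, Matrix.map_mul]
  rw [Matrix.charpoly, Matrix.charpoly, key, det_mul, det_mul, mul_comm, ← mul_assoc,
    ← det_mul, ← Matrix.map_mul, hU', Matrix.map_one _ (map_zero C) (map_one C), det_one, one_mul]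

private lemma roots_charpoly_herm {k : ℕ} {M : Matrix (Fin k) (Fin k) ℝ} (hM : M.IsHermitian) :
    M.charpoly.roots = Multiset.map hM.eigenvalues Finset.univ.val := by
  have h4 : (RCLike.ofReal : ℝ → ℝ) = id := by ext; simp
  have h0 : M.charpoly = (Matrix.diagonal hM.eigenvalues).charpoly := by
    conv_lhs => rw [hM.spectral_theorem, Unitary.conjStarAlgAut_apply]
    rw [charpoly_conj _ _ ((Matrix.mem_unitaryGroup_iff).mp (hM.eigenvectorUnitary).2)
      ((Matrix.mem_unitaryGroup_iff').mp (hM.eigenvectorUnitary).2)]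
    rw [h4]; rfl
  rw [h0, charpoly_diag]
  have h5 : ∏ i, (X - C (hM.eigenvalues i))
      = (Multiset.map (fun a => X - C a) (Multiset.map hM.eigenvalues Finset.univ.val)).prod := by
    rw [Multiset.map_map]; rfl
  rw [h5, roots_multiset_prod_X_sub_C]

private lemma charpoly_inv {k : ℕ} {M : Matrix (Fin k) (Fin k) ℝ} (hM : M.PosDef) :
    (M⁻¹).charpoly = (Matrix.diagonal (fun i => (hM.1.eigenvalues i)⁻¹)).charpoly := by
  have h4 : (RCLike.ofReal : ℝ → ℝ) = id := by ext; simp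
  set U : Matrix (Fin k) (Fin k) ℝ := (hM.1.eigenvectorUnitary : Matrix (Fin k) (Fin k) ℝ)
    with hUdef
  have hU : U * star U = 1 := (Matrix.mem_unitaryGroup_iff).mp (hM.1.eigenvectorUnitary).2
  have hU' : star U * U = 1 := (Matrix.mem_unitaryGroup_iff').mp (hM.1.eigenvectorUnitary).2
  have h5 : M = U * Matrix.diagonal hM.1.eigenvalues * star U := by
    conv_lhs => rw [hM.1.spectral_theorem]
    rw [h4]
    rfl
  have hdd : Matrix.diagonal hM.1.eigenvalues
      * Matrix.diagonal (fun i => (hM.1.eigenvalues i)⁻¹) = 1 := by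
    have he : (fun i => hM.1.eigenvalues i * (hM.1.eigenvalues i)⁻¹) = fun _ => (1 : ℝ) :=
      funext fun i => mul_inv_cancel₀ (hM.eigenvalues_pos i).ne'
    rw [Matrix.diagonal_mul_diagonal, he, Matrix.diagonal_one]
  have hinv : M⁻¹ = U * Matrix.diagonal (fun i => (hM.1.eigenvalues i)⁻¹) * star U := by
    apply Matrix.inv_eq_right_inv
    refine (congrArg (fun A => A * (U * Matrix.diagonal (fun i => (hM.1.eigenvalues i)⁻¹)
      * star U)) h5).trans ?_
    calc U * Matrix.diagonal hM.1.eigenvalues * star U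
        * (U * Matrix.diagonal (fun i => (hM.1.eigenvalues i)⁻¹) * star U)
        = U * (Matrix.diagonal hM.1.eigenvalues * ((star U * U)
            * Matrix.diagonal (fun i => (hM.1.eigenvalues i)⁻¹))) * star U := by
          simp only [Matrix.mul_assoc]
      _ = 1 := by rw [hU', Matrix.one_mul, hdd, Matrix.mul_one, hU]
  rw [hinv, charpoly_conj _ _ hU hU']

private lemma sort_eq_of_perm' {k : ℕ} {f g : Fin k → ℝ}
    (h : Multiset.map f Finset.univ.val = Multiset.map g Finset.univ.val) :
    f ∘ Tuple.sort f = g ∘ Tuple.sort g := by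
  have hp : (List.ofFn f).Perm (List.ofFn g) := by
    rw [← Multiset.coe_eq_coe]
    simpa [List.ofFn_eq_map, Fin.univ_def] using h
  apply List.ofFn_injective
  exact List.Perm.eq_of_sortedLE
    (Tuple.monotone_sort f).sortedLE_ofFn (Tuple.monotone_sort g).sortedLE_ofFn
    (((Tuple.sort f).ofFn_comp_perm f).trans (hp.trans ((Tuple.sort g).ofFn_comp_perm g).symm))

private lemma sortedEigs_inv {k : ℕ} {M : Matrix (Fin k) (Fin k) ℝ} (hM : M.PosDef)
    (i : Fin k) : sortedEigs M⁻¹ i = (sortedEigs M i.rev)⁻¹ := by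
  have hH : M.IsHermitian := hM.1
  have hH' : (M⁻¹).IsHermitian := hM.inv.1
  have hmult : Multiset.map (hH'.eigenvalues) Finset.univ.val
      = Multiset.map (fun i => (hH.eigenvalues i)⁻¹) Finset.univ.val := by
    have h1 := roots_charpoly_herm hH'
    have h2 := charpoly_inv hM
    rw [h2, charpoly_diag] at h1
    have h5 : ∏ i, (X - C ((hM.1.eigenvalues i)⁻¹))
        = (Multiset.map (fun a => X - C a)
            (Multiset.map (fun i => (hH.eigenvalues i)⁻¹) Finset.univ.val)).prod := by
      rw [Multiset.map_map]; rfl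
    rw [h5, roots_multiset_prod_X_sub_C] at h1
    exact h1.symm
  set f : Fin k → ℝ := hH.eigenvalues with hf
  set g : Fin k → ℝ := fun i => (f i)⁻¹ with hg
  have h1 : hH'.eigenvalues ∘ Tuple.sort hH'.eigenvalues = g ∘ Tuple.sort g :=
    sort_eq_of_perm' hmult
  set σ : Equiv.Perm (Fin k) := (Fin.revPerm).trans (Tuple.sort f) with hσ
  have hmono : Monotone (g ∘ σ) := by
    intro x y hxy
    have h2 : y.rev ≤ x.rev := Fin.rev_le_rev.mpr hxy
    have h3 := Tuple.monotone_sort f h2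
    have hpos : 0 < (f ∘ Tuple.sort f) y.rev := hM.eigenvalues_pos _
    simpa [hg, hσ] using inv_anti₀ hpos h3
  have h4 : g ∘ σ = g ∘ Tuple.sort g := Tuple.comp_sort_eq_comp_iff_monotone.mpr hmono
  have h5 : sortedEigs M⁻¹ = fun i => (hH'.eigenvalues ∘ Tuple.sort hH'.eigenvalues) i.rev := by
    rw [sortedEigs, dif_pos hH']
  have h6 : sortedEigs M = fun i => (f ∘ Tuple.sort f) i.rev := by
    rw [sortedEigs, dif_pos hH]
  rw [h5, h6, h1, ← h4]
  simp [hσ, hg]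

end Aux

theorem stmt_8 {n m s : ℕ} (hn : 0 < n) (hm : 0 < m) (hs : 0 < s) (hsn : s ≤ n)
    (C : Matrix (Fin n) (Fin n) ℝ) (hC : C.PosDef)
    (A : Matrix (Fin m) (Fin n) ℝ) (b : Fin m → ℝ) :
    -- (C⁻¹, 0, 0, 0, 1) is DFact-feasible for (C, s, A, b; C^{1/2})
    DFactFeasible A hC.posSemidef.sqrt C⁻¹ 0 0 0 1 ∧
    -- and its objective value equals the spectral bound:
    -- −Σ_{ℓ=n−s+1}^{n} log λ_ℓ(C⁻¹) = Σ_{ℓ=1}^{s} log λ_ℓ(C)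
    (DFactObj s b C⁻¹ (0 : Fin n → ℝ) (0 : Fin m → ℝ) 1 =
      ∑ i : Fin n, if (i : ℕ) < s then Real.log (sortedEigs C i) else 0) ∧
    -(∑ i : Fin n, if n - s ≤ (i : ℕ) then Real.log (sortedEigs C⁻¹ i) else 0) =
      ∑ i : Fin n, if (i : ℕ) < s then Real.log (sortedEigs C i) else 0 := by
  -- the key spectral identity
  have hkey : -(∑ i : Fin n, if n - s ≤ (i : ℕ) then Real.log (sortedEigs C⁻¹ i) else 0) =
      ∑ i : Fin n, if (i : ℕ) < s then Real.log (sortedEigs C i) else 0 := by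
    have h1 : ∀ i : Fin n, (if n - s ≤ (i : ℕ) then Real.log (sortedEigs C⁻¹ i) else 0)
        = -(if n - s ≤ (i : ℕ) then Real.log (sortedEigs C i.rev) else 0) := by
      intro i
      by_cases h : n - s ≤ (i : ℕ)
      · rw [if_pos h, if_pos h, sortedEigs_inv hC, Real.log_inv]
      · rw [if_neg h, if_neg h, neg_zero]
    rw [Finset.sum_congr rfl (fun i _ => h1 i), Finset.sum_neg_distrib, neg_neg]
    refine (Fintype.sum_equiv Fin.revPerm _ _ ?_).symm
    intro i
    have hi : (i : ℕ) < n := i.isLt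
    have hrev : ((Fin.revPerm i : Fin n) : ℕ) = n - 1 - (i : ℕ) := by
      simp [Fin.rev]
      omega
    have hiff : (i : ℕ) < s ↔ n - s ≤ ((Fin.revPerm i : Fin n) : ℕ) := by
      rw [hrev]; omega
    by_cases h : (i : ℕ) < s
    · rw [if_pos h, if_pos (hiff.mp h)]
      congr 1
      simp
    · rw [if_neg h, if_neg (fun hc => h (hiff.mpr hc))]
  refine ⟨?_, ?_, hkey⟩
  · -- feasibility
    refine ⟨hC.inv, fun j => le_refl 0, fun j => le_refl 0, fun i => le_refl 0, fun j => ?_⟩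
    have hS : hC.posSemidef.sqrt * C⁻¹ * hC.posSemidef.sqrtᵀ = 1 := by
      set S := hC.posSemidef.sqrt with hSdef
      have hHerm : Sᵀ = S := by
        have := hC.posSemidef.sqrt_isHermitian
        simpa [Matrix.IsHermitian, Matrix.conjTranspose] using this
      have hSS : S * S = C := hC.posSemidef.sqrt_mul_self
      have hdet : IsUnit S.det := by
        have hd : S.det * S.det = C.det := by rw [← Matrix.det_mul, hSS]
        have : S.det ≠ 0 := by
          intro h0
          have := hC.det_pos
          rw [← hd, h0, mul_zero] at this
          exact lt_irrefl _ this
        exact isUnit_iff_ne_zero.mpr this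
      have hCinv : C⁻¹ = S⁻¹ * S⁻¹ := by rw [← hSS, Matrix.mul_inv_rev]
      rw [hHerm, hCinv, ← Matrix.mul_assoc, Matrix.mul_assoc S S⁻¹ S⁻¹,
        ← Matrix.mul_assoc S S⁻¹ _, Matrix.mul_nonsing_inv _ hdet, Matrix.one_mul]
      exact Matrix.nonsing_inv_mul _ hdet
    rw [hS]
    simp [Matrix.one_apply_eq]
  · -- objective value
    rw [DFactObj]
    simp only [Pi.zero_apply, Finset.sum_const_zero, zero_mul, add_zero, one_mul]
    rw [← hkey]
    ring
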